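/- For monotone boolean functions of decision tree depth d (d ≥ 5), the maximum number R_d of relevant variables satisfies R_d ≤ 2^{d−2} + 2. -/
import Mathlib


open Finset
open scoped Classical

namespace BF

noncomputable section

/-- flip the bits of `x` belonging to `B`. -/
def flipS {n : ℕ} (x : Fin n → Bool) (B : Finset (Fin n)) : Fin n → Bool :=
  fun i => if i ∈ B then !(x i) else x i

/-- flip the `i`-th bit of `x`. -/
def flip1 {n : ℕ} (x : Fin n → Bool) (i : Fin n) : Fin n → Bool :=
  fun j => if j = i then !(x j) else x j

/-- real value of a boolean. -/
def bval (b : Bool) : ℝ := if b then 1 else 0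

/-- coefficient of the monomial `∏_{i ∈ S} x_i` in the unique multilinear
real polynomial expansion of `f` (Möbius inversion over the subcube lattice). -/
def coeffS {n : ℕ} (f : (Fin n → Bool) → ℝ) (S : Finset (Fin n)) : ℝ :=
  ∑ T ∈ S.powerset, (-1 : ℝ) ^ (S.card - T.card) * f (fun i => decide (i ∈ T))

/-- degree of the multilinear expansion of a real-valued function on the cube. -/
def degF {n : ℕ} (f : (Fin n → Bool) → ℝ) : ℕ :=
  (Finset.univ.filter fun S : Finset (Fin n) => coeffS f S ≠ 0).sup Finset.card

/-- degree of a boolean function. -/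
def degB {n : ℕ} (f : (Fin n → Bool) → Bool) : ℕ := degF (fun x => bval (f x))

/-- block sensitivity of `f` at `x`. -/
def bsAt {n : ℕ} (f : (Fin n → Bool) → Bool) (x : Fin n → Bool) : ℕ :=
  (Finset.univ.filter fun 𝓑 : Finset (Finset (Fin n)) =>
      (∀ B ∈ 𝓑, f (flipS x B) ≠ f x) ∧
      ∀ A ∈ 𝓑, ∀ B ∈ 𝓑, A ≠ B → Disjoint A B).sup Finset.card

/-- block sensitivity of `f`. -/
def bs {n : ℕ} (f : (Fin n → Bool) → Bool) : ℕ := Finset.univ.sup (bsAt f)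

/-- sensitivity of `f` at `x`. -/
def sx {n : ℕ} (f : (Fin n → Bool) → Bool) (x : Fin n → Bool) : ℕ :=
  (Finset.univ.filter fun i => f (flip1 x i) ≠ f x).card

/-- (maximum) sensitivity of `f`. -/
def sens {n : ℕ} (f : (Fin n → Bool) → Bool) : ℕ := Finset.univ.sup (sx f)

/-- coordinate `i` is relevant for `f`. -/
def Rel {n : ℕ} (i : Fin n) (f : (Fin n → Bool) → Bool) : Prop :=
  ∃ x, f (flip1 x i) ≠ f x

/-- the set of relevant coordinates of `f`. -/
def relSet {n : ℕ} (f : (Fin n → Bool) → Bool) : Finset (Fin n) :=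
  Finset.univ.filter fun i => Rel i f

/-- the number of relevant variables `n(f)`. -/
def nrel {n : ℕ} (f : (Fin n → Bool) → Bool) : ℕ := (relSet f).card

/-- influence of coordinate `i` on `f` (uniform distribution). -/
def infl {n : ℕ} (f : (Fin n → Bool) → Bool) (i : Fin n) : ℝ :=
  ((Finset.univ.filter fun x : Fin n → Bool => f x ≠ f (flip1 x i)).card : ℝ) / 2 ^ n

/-- total influence `I[f]`. -/
def totalInf {n : ℕ} (f : (Fin n → Bool) → Bool) : ℝ := ∑ i, infl f i

/-- restriction of `f` fixing the coordinates in `H` according to `α`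
(viewed as a function on the full cube not depending on the coordinates in `H`). -/
def restrict {n : ℕ} (f : (Fin n → Bool) → Bool) (H : Finset (Fin n))
    (α : Fin n → Bool) : (Fin n → Bool) → Bool :=
  fun x => f (fun i => if i ∈ H then α i else x i)

/-- certificate complexity of `f` at `x`. -/
def certAt {n : ℕ} (f : (Fin n → Bool) → Bool) (x : Fin n → Bool) : ℕ :=
  sInf {k | ∃ S : Finset (Fin n), S.card = k ∧
    ∀ y, (∀ i ∈ S, y i = x i) → f y = f x}

/-- certificate complexity `C(f)`. -/
def certC {n : ℕ} (f : (Fin n → Bool) → Bool) : ℕ := Finset.univ.sup (certAt f)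

/-- `f` is in standard form: `f(0) = 0` and `f(e_i) = 1` for every basis vector. -/
def stdForm {b : ℕ} (f : (Fin b → Bool) → Bool) : Prop :=
  f (fun _ => false) = false ∧ ∀ i : Fin b, f (fun j => decide (j = i)) = true

end

end BF

open BF

/-- deterministic decision trees on `n` boolean variables. -/
inductive DTree (n : ℕ) where
  | leaf : Bool → DTree n
  | node : Fin n → DTree n → DTree n → DTree n

/-- evaluation of a decision tree. -/
def DTree.evalT {n : ℕ} : DTree n → (Fin n → Bool) → Bool
  | .leaf b, _ => b
  | .node i t0 t1, x => if x i then (t1.evalT x) else (t0.evalT x)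

/-- depth of a decision tree. -/
def DTree.depth {n : ℕ} : DTree n → ℕ
  | .leaf _ => 0
  | .node _ t0 t1 => 1 + max t0.depth t1.depth

/-- decision tree depth `DT(f)`: minimal worst-case number of queries of a
deterministic decision tree computing `f`. -/
noncomputable def DT {n : ℕ} (f : (Fin n → Bool) → Bool) : ℕ :=
  sInf {d | ∃ t : DTree n, t.depth ≤ d ∧ ∀ x, t.evalT x = f x}

namespace Aux

variable {n : ℕ}

/-- restriction fixing one variable. -/
def fx (f : (Fin n → Bool) → Bool) (z : Fin n) (b : Bool) : (Fin n → Bool) → Bool :=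
  fun x => f (Function.update x z b)

/-- constant function. -/
def Cst (f : (Fin n → Bool) → Bool) : Prop := ∀ x y, f x = f y

/-- substitute a fixed value for variable `z` in a tree. -/
def fixVar : DTree n → Fin n → Bool → DTree n
  | .leaf c, _, _ => .leaf c
  | .node i t0 t1, z, b =>
    if i = z then (if b then fixVar t1 z b else fixVar t0 z b)
    else .node i (fixVar t0 z b) (fixVar t1 z b)

lemma depth_fixVar (t : DTree n) (z : Fin n) (b : Bool) :
    (fixVar t z b).depth ≤ t.depth := by
  induction t with
  | leaf c => simp [fixVar, DTree.depth]
  | node i t0 t1 ih0 ih1 =>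
    simp only [fixVar]
    split_ifs with h h2
    · exact le_trans ih1 (by simp [DTree.depth]; omega)
    · exact le_trans ih0 (by simp [DTree.depth]; omega)
    · simp [DTree.depth]; omega

lemma eval_fixVar (t : DTree n) (z : Fin n) (b : Bool) (x : Fin n → Bool) :
    (fixVar t z b).evalT x = t.evalT (Function.update x z b) := by
  induction t with
  | leaf c => simp [fixVar, DTree.evalT]
  | node i t0 t1 ih0 ih1 =>
    by_cases h : i = z
    · subst h
      cases b with
      | false => simp [fixVar, DTree.evalT, ih0, Function.update_self]
      | true => simp [fixVar, DTree.evalT, ih1, Function.update_self]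
    · simp [fixVar, h, DTree.evalT, Function.update_of_ne (Ne.symm h)]
      rw [ih0, ih1]

/-- a complete tree querying variables `< m`. -/
def full : (m : ℕ) → m ≤ n → ((Fin n → Bool) → Bool) → DTree n
  | 0, _, f => .leaf (f (fun _ => false))
  | m+1, h, f => .node ⟨m, h⟩ (full m (Nat.le_of_succ_le h) (fx f ⟨m, h⟩ false))
      (full m (Nat.le_of_succ_le h) (fx f ⟨m, h⟩ true))

/-- `f` depends only on coordinates `< m`. -/
def Dep (m : ℕ) (f : (Fin n → Bool) → Bool) : Prop :=
  ∀ x y, (∀ i : Fin n, (i : ℕ) < m → x i = y i) → f x = f y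

lemma eval_full : ∀ (m : ℕ) (h : m ≤ n) (f : (Fin n → Bool) → Bool), Dep m f →
    ∀ x, (full m h f).evalT x = f x := by
  intro m
  induction m with
  | zero => intro h f hdep x; exact (hdep _ _ (by omega)).symm
  | succ m ih =>
    intro h f hdep x
    have hdep' : ∀ b, Dep m (fx f ⟨m, h⟩ b) := by
      intro b u v huv
      apply hdep
      intro i hi
      by_cases hiz : i = ⟨m, h⟩
      · subst hiz; simp [Function.update_self]
      · rw [Function.update_of_ne hiz, Function.update_of_ne hiz]
        exact huv i (by
          rcases Nat.lt_succ_iff_lt_or_eq.mp hi with h' | h'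
          · exact h'
          · exact absurd (Fin.ext h' : i = ⟨m, h⟩) hiz)
    have key : ∀ b, (full m (Nat.le_of_succ_le h) (fx f ⟨m, h⟩ b)).evalT x
        = f (Function.update x ⟨m, h⟩ b) := by
      intro b; exact ih (Nat.le_of_succ_le h) _ (hdep' b) x
    show (if x ⟨m, h⟩ then _ else _) = f x
    by_cases hx : x ⟨m, h⟩ = true
    · rw [if_pos hx, key true, ← hx, Function.update_eq_self]
    · rw [if_neg hx, key false, show (false : Bool) = x ⟨m, h⟩ from (Bool.not_eq_true _ ▸ hx).symm,
        Function.update_eq_self]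

lemma exists_tree_computing (f : (Fin n → Bool) → Bool) :
    ∃ t : DTree n, ∀ x, t.evalT x = f x :=
  ⟨full n le_rfl f, eval_full n le_rfl f (fun x y h => congrArg f (funext fun i => h i i.isLt)) ⟩

lemma DT_le_of_tree {t : DTree n} {f : (Fin n → Bool) → Bool} (h : ∀ x, t.evalT x = f x) :
    DT f ≤ t.depth :=
  Nat.sInf_le ⟨t, le_rfl, h⟩

lemma exists_tree_of_DT_le {f : (Fin n → Bool) → Bool} {d : ℕ} (h : DT f ≤ d) :
    ∃ t : DTree n, t.depth ≤ d ∧ ∀ x, t.evalT x = f x := by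
  have hne : {d | ∃ t : DTree n, t.depth ≤ d ∧ ∀ x, t.evalT x = f x}.Nonempty := by
    obtain ⟨t, ht⟩ := exists_tree_computing f
    exact ⟨t.depth, t, le_rfl, ht⟩
  obtain ⟨t, ht1, ht2⟩ := Nat.sInf_mem hne
  exact ⟨t, le_trans ht1 h, ht2⟩

lemma cst_of_DT_le_zero {f : (Fin n → Bool) → Bool} (h : DT f ≤ 0) : Cst f := by
  obtain ⟨t, ht1, ht2⟩ := exists_tree_of_DT_le h
  cases t with
  | leaf c => intro x y; rw [← ht2 x, ← ht2 y]; rfl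
  | node i t0 t1 => simp [DTree.depth] at ht1

lemma DT_cst {f : (Fin n → Bool) → Bool} (h : Cst f) : DT f ≤ 0 := by
  refine DT_le_of_tree (t := .leaf (f (fun _ => false))) ?_
  intro x; exact (h _ _)

lemma DT_fx_le (f : (Fin n → Bool) → Bool) (z : Fin n) (b : Bool) :
    DT (fx f z b) ≤ DT f := by
  obtain ⟨t, ht1, ht2⟩ := exists_tree_of_DT_le (le_refl (DT f))
  refine le_trans (DT_le_of_tree (t := fixVar t z b) ?_) (le_trans (depth_fixVar t z b) ht1)
  intro x; rw [eval_fixVar, ht2]; rfl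

lemma DT_subtree {f : (Fin n → Bool) → Bool} {z : Fin n} {t0 t1 : DTree n}
    (h : ∀ x, (DTree.node z t0 t1).evalT x = f x) :
    DT (fx f z false) ≤ t0.depth ∧ DT (fx f z true) ≤ t1.depth := by
  constructor
  · refine le_trans (DT_le_of_tree (t := fixVar t0 z false) ?_) (depth_fixVar t0 z false)
    intro x
    rw [eval_fixVar, show t0.evalT (Function.update x z false)
      = (DTree.node z t0 t1).evalT (Function.update x z false) from ?_, h]
    · rfl
    · show _ = if Function.update x z false z then _ else _
      simp [Function.update_self]
  · refine le_trans (DT_le_of_tree (t := fixVar t1 z true) ?_) (depth_fixVar t1 z true)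
    intro x
    rw [eval_fixVar, show t1.evalT (Function.update x z true)
      = (DTree.node z t0 t1).evalT (Function.update x z true) from ?_, h]
    · rfl
    · show _ = if Function.update x z true z then _ else _
      simp [Function.update_self]

lemma DT_comp (f : (Fin n → Bool) → Bool) (z : Fin n) :
    DT f ≤ 1 + max (DT (fx f z false)) (DT (fx f z true)) := by
  obtain ⟨t0, h0d, h0⟩ := exists_tree_of_DT_le (le_refl (DT (fx f z false)))
  obtain ⟨t1, h1d, h1⟩ := exists_tree_of_DT_le (le_refl (DT (fx f z true)))
  refine le_trans (DT_le_of_tree (t := .node z t0 t1) ?_) ?_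
  · intro x
    show (if x z then t1.evalT x else t0.evalT x) = f x
    by_cases hx : x z = true
    · rw [if_pos hx, h1, fx, ← hx, Function.update_eq_self]
    · rw [if_neg hx, h0, fx, show (false : Bool) = x z from (Bool.not_eq_true _ ▸ hx).symm,
        Function.update_eq_self]
  · show 1 + max t0.depth t1.depth ≤ _
    have := max_le_max h0d h1d
    omega

lemma flip1_apply (x : Fin n → Bool) (i j : Fin n) :
    flip1 x i j = if j = i then !(x j) else x j := rfl

lemma cst_fx {f : (Fin n → Bool) → Bool} (h : Cst f) (z : Fin n) (b : Bool) :
    Cst (fx f z b) := fun x y => h _ _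

lemma relSet_eq_empty_of_cst {f : (Fin n → Bool) → Bool} (h : Cst f) :
    relSet f = ∅ := by
  ext i
  simp only [relSet, Finset.mem_filter, Finset.mem_univ, true_and, Finset.notMem_empty,
    iff_false]
  rintro ⟨x, hx⟩
  exact hx (h _ _)

lemma cst_of_false {f : (Fin n → Bool) → Bool} (h : ∀ x, f x = false) : Cst f := by
  intro x y; rw [h, h]

lemma cst_of_true {f : (Fin n → Bool) → Bool} (h : ∀ x, f x = true) : Cst f := by
  intro x y; rw [h, h]

lemma update_flip1_comm {x : Fin n → Bool} {i z : Fin n} (h : i ≠ z) (b : Bool) :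
    Function.update (flip1 x i) z b = flip1 (Function.update x z b) i := by
  funext j
  by_cases hj : j = z
  · subst hj
    rw [Function.update_self, flip1_apply, if_neg (Ne.symm h), Function.update_self]
  · rw [Function.update_of_ne hj, flip1_apply, flip1_apply, Function.update_of_ne hj]


lemma relSet_subset_root (f : (Fin n → Bool) → Bool) (z : Fin n) :
    relSet f ⊆ insert z (relSet (fx f z false) ∪ relSet (fx f z true)) := by
  intro i hi
  simp only [relSet, Finset.mem_filter, Finset.mem_univ, true_and] at hi
  obtain ⟨x, hx⟩ := hi
  by_cases hiz : i = z
  · subst hiz; exact Finset.mem_insert_self _ _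
  · have hrel : Rel i (fx f z (x z)) := by
      refine ⟨x, ?_⟩
      have h1 : fx f z (x z) (flip1 x i) = f (flip1 x i) := by
        show f (Function.update (flip1 x i) z (x z)) = _
        rw [show x z = flip1 x i z from (by rw [flip1_apply, if_neg (Ne.symm hiz)]),
          Function.update_eq_self]
      have h2 : fx f z (x z) x = f x := by
        show f (Function.update x z (x z)) = _
        rw [Function.update_eq_self]
      rw [h1, h2]; exact hx
    refine Finset.mem_insert_of_mem ?_
    rw [Finset.mem_union]
    cases hxz : x z with
    | false => left; simp only [relSet, Finset.mem_filter, Finset.mem_univ, true_and]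
               rw [hxz] at hrel; exact hrel
    | true => right; simp only [relSet, Finset.mem_filter, Finset.mem_univ, true_and]
              rw [hxz] at hrel; exact hrel

/-- locally minimal one-point. -/
def MinOne (f : (Fin n → Bool) → Bool) (p : Fin n → Bool) : Prop :=
  f p = true ∧ ∀ i, p i = true → f (flip1 p i) = false

/-- locally maximal zero-point. -/
def MaxZero (f : (Fin n → Bool) → Bool) (q : Fin n → Bool) : Prop :=
  f q = false ∧ ∀ i, q i = false → f (flip1 q i) = true

lemma exists_minOne_aux (f : (Fin n → Bool) → Bool) :
    ∀ (k : ℕ) (x : Fin n → Bool), (Finset.univ.filter fun i => x i = true).card ≤ k →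
    f x = true → ∃ p, (∀ i, p i = true → x i = true) ∧ MinOne f p := by
  intro k
  induction k with
  | zero =>
    intro x hc hx
    refine ⟨x, fun i h => h, hx, fun i hi => ?_⟩
    exact absurd (Finset.card_eq_zero.mp (Nat.le_zero.mp hc) ▸
      (Finset.mem_filter.mpr ⟨Finset.mem_univ i, hi⟩)) (Finset.notMem_empty i)
  | succ k ih =>
    intro x hc hx
    by_cases hmin : ∀ i, x i = true → f (flip1 x i) = false
    · exact ⟨x, fun i h => h, hx, hmin⟩
    · push_neg at hmin
      obtain ⟨i, hi, hfi⟩ := hmin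
      have hfi' : f (flip1 x i) = true := by
        cases h : f (flip1 x i) with
        | false => exact absurd h hfi
        | true => rfl
      have hsub : (Finset.univ.filter fun j => flip1 x i j = true)
          = (Finset.univ.filter fun j => x j = true).erase i := by
        ext j
        simp only [Finset.mem_filter, Finset.mem_univ, true_and, Finset.mem_erase]
        rw [flip1_apply]
        by_cases hj : j = i
        · subst hj; simp [hi]
        · simp [hj]
      have hcard : (Finset.univ.filter fun j => flip1 x i j = true).card ≤ k := by
        rw [hsub, Finset.card_erase_of_mem (Finset.mem_filter.mpr ⟨Finset.mem_univ i, hi⟩)]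
        omega
      obtain ⟨p, hp1, hp2⟩ := ih (flip1 x i) hcard hfi'
      refine ⟨p, fun j hj => ?_, hp2⟩
      have := hp1 j hj
      rw [flip1_apply] at this
      by_cases hji : j = i
      · exact hji ▸ hi
      · rwa [if_neg hji] at this

lemma exists_minOne {f : (Fin n → Bool) → Bool} {x : Fin n → Bool} (hx : f x = true) :
    ∃ p, (∀ i, p i = true → x i = true) ∧ MinOne f p :=
  exists_minOne_aux f _ x le_rfl hx

lemma exists_maxZero_aux (f : (Fin n → Bool) → Bool) :
    ∀ (k : ℕ) (x : Fin n → Bool), (Finset.univ.filter fun i => x i = false).card ≤ k →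
    f x = false → ∃ q, (∀ i, q i = false → x i = false) ∧ MaxZero f q := by
  intro k
  induction k with
  | zero =>
    intro x hc hx
    refine ⟨x, fun i h => h, hx, fun i hi => ?_⟩
    exact absurd (Finset.card_eq_zero.mp (Nat.le_zero.mp hc) ▸
      (Finset.mem_filter.mpr ⟨Finset.mem_univ i, hi⟩)) (Finset.notMem_empty i)
  | succ k ih =>
    intro x hc hx
    by_cases hmin : ∀ i, x i = false → f (flip1 x i) = true
    · exact ⟨x, fun i h => h, hx, hmin⟩
    · push_neg at hmin
      obtain ⟨i, hi, hfi⟩ := hmin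
      have hfi' : f (flip1 x i) = false := by
        cases h : f (flip1 x i) with
        | true => exact absurd h hfi
        | false => rfl
      have hsub : (Finset.univ.filter fun j => flip1 x i j = false)
          = (Finset.univ.filter fun j => x j = false).erase i := by
        ext j
        simp only [Finset.mem_filter, Finset.mem_univ, true_and, Finset.mem_erase]
        rw [flip1_apply]
        by_cases hj : j = i
        · subst hj; simp [hi]
        · simp [hj]
      have hcard : (Finset.univ.filter fun j => flip1 x i j = false).card ≤ k := by
        rw [hsub, Finset.card_erase_of_mem (Finset.mem_filter.mpr ⟨Finset.mem_univ i, hi⟩)]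
        omega
      obtain ⟨q, hq1, hq2⟩ := ih (flip1 x i) hcard hfi'
      refine ⟨q, fun j hj => ?_, hq2⟩
      have := hq1 j hj
      rw [flip1_apply] at this
      by_cases hji : j = i
      · exact hji ▸ hi
      · rwa [if_neg hji] at this

lemma exists_maxZero {f : (Fin n → Bool) → Bool} {x : Fin n → Bool} (hx : f x = false) :
    ∃ q, (∀ i, q i = false → x i = false) ∧ MaxZero f q :=
  exists_maxZero_aux f _ x le_rfl hx

lemma rel_of_minOne {f : (Fin n → Bool) → Bool} {p : Fin n → Bool} (h : MinOne f p)
    {i : Fin n} (hi : p i = true) : Rel i f :=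
  ⟨p, by rw [h.2 i hi, h.1]; simp⟩

lemma rel_of_maxZero {f : (Fin n → Bool) → Bool} {q : Fin n → Bool} (h : MaxZero f q)
    {i : Fin n} (hi : q i = false) : Rel i f :=
  ⟨q, by rw [h.2 i hi, h.1]; simp⟩

lemma cross {f0 f1 : (Fin n → Bool) → Bool} (hm1 : Monotone f1)
    (hle : ∀ x, f0 x = true → f1 x = true) {p q : Fin n → Bool}
    (hp : f0 p = true) (hq : f1 q = false) : ∃ i, p i = true ∧ q i = false := by
  by_contra h
  push_neg at h
  have hpq : p ≤ q := by
    intro i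
    cases hpi : p i with
    | false => exact Bool.false_le _
    | true =>
      have := h i hpi
      cases hqi : q i with
      | false => exact absurd hqi this
      | true => exact le_rfl
  have := hm1 hpq
  rw [hle p hp, hq] at this
  exact absurd this (by simp)

lemma cst_of_const {f : (Fin n → Bool) → Bool} {c : Bool} (h : ∀ x, f x = c) : Cst f := by
  intro x y; rw [h, h]

lemma AS_extract {f0 : (Fin n → Bool) → Bool} {w : Fin n}
    (H : ∀ p, MinOne f0 p → p w = true) : ∀ x, x w = false → f0 x = false := by
  intro x hw
  cases hfx : f0 x with
  | false => rfl
  | true =>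
    obtain ⟨p, hp1, hp2⟩ := exists_minOne hfx
    have := hp1 w (H p hp2)
    rw [hw] at this
    exact absurd this (by simp)

lemma AT_extract {f1 : (Fin n → Bool) → Bool} {w : Fin n}
    (H : ∀ q, MaxZero f1 q → q w = false) : ∀ x, x w = true → f1 x = true := by
  intro x hw
  cases hfx : f1 x with
  | true => rfl
  | false =>
    obtain ⟨q, hq1, hq2⟩ := exists_maxZero hfx
    have := hq1 w (H q hq2)
    rw [hw] at this
    exact absurd this (by simp)

/-- key depth-reduction lemma: if `f(x) = b` whenever `x u = b` (i.e. `f` is the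
AND/OR of `x_u` with the residual function), then fixing `u := !b` reduces the
decision-tree depth strictly, provided the residual function is not constant. -/
lemma DT_fx_succ (b : Bool) : ∀ (d : ℕ) (f : (Fin n → Bool) → Bool) (u : Fin n),
    DT f ≤ d → (∀ x, x u = b → f x = b) → ¬ Cst (fx f u (!b)) →
    DT (fx f u (!b)) + 1 ≤ d := by
  intro d
  induction d with
  | zero =>
    intro f u hDT habs hnc
    exact absurd (cst_fx (cst_of_DT_le_zero hDT) u (!b)) hnc
  | succ d ih =>
    intro f u hDT habs hnc
    obtain ⟨t, htd, hte⟩ := exists_tree_of_DT_le hDT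
    cases t with
    | leaf c =>
      exact absurd (cst_fx (fun x y => by rw [← hte x, ← hte y]; rfl) u (!b)) hnc
    | node w t0 t1 =>
      have h0 : t0.depth ≤ d := by simp [DTree.depth] at htd; omega
      have h1 : t1.depth ≤ d := by simp [DTree.depth] at htd; omega
      have hsub := DT_subtree hte
      by_cases hwu : w = u
      · subst hwu
        cases b with
        | false =>
          simp only [Bool.not_false] at hnc ⊢
          have := le_trans hsub.2 h1
          omega
        | true =>
          simp only [Bool.not_true] at hnc ⊢
          have := le_trans hsub.1 h0
          omega
      · have hu : u ≠ w := fun h => hwu h.symm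
        have hDTfb : ∀ c, DT (fx f w c) ≤ d := by
          intro c
          cases c with
          | false => exact le_trans hsub.1 h0
          | true => exact le_trans hsub.2 h1
        have hfb : ∀ (c : Bool) (x : Fin n → Bool), x u = b → fx f w c x = b := by
          intro c x hx
          apply habs
          rw [Function.update_of_ne hu]
          exact hx
        have hcomm : ∀ c, fx (fx f u (!b)) w c = fx (fx f w c) u (!b) := by
          intro c
          funext x
          show f (Function.update (Function.update x w c) u (!b))
            = f (Function.update (Function.update x u (!b)) w c)
          rw [Function.update_comm hwu]
        by_cases hd0 : d = 0
        · subst hd0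
          have hcstc : ∀ c, Cst (fx f w c) := fun c => cst_of_DT_le_zero (hDTfb c)
          have hval : ∀ (c : Bool) (x : Fin n → Bool), fx f w c x = b := by
            intro c x
            rw [hcstc c x (fun _ => b), hfb c (fun _ => b) rfl]
          refine absurd (cst_of_const (c := b) ?_) hnc
          intro x
          have h1' : fx f u (!b) x = fx f w ((Function.update x u (!b)) w)
              (Function.update x u (!b)) := by
            show f _ = f _
            rw [Function.update_eq_self]
          rw [h1', hval]
        · have hGc : ∀ c, DT (fx (fx f u (!b)) w c) ≤ d - 1 := by
            intro c
            by_cases hcst : Cst (fx (fx f u (!b)) w c)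
            · have := DT_cst hcst; omega
            · rw [hcomm c] at hcst ⊢
              have := ih (fx f w c) u (hDTfb c) (hfb c) hcst
              omega
          have hc := DT_comp (fx f u (!b)) w
          have hm := max_le (hGc false) (hGc true)
          omega

lemma mem_relSet {f : (Fin n → Bool) → Bool} {i : Fin n} : i ∈ relSet f ↔ Rel i f := by
  simp [relSet]

lemma exists_true_of_not_cst {f : (Fin n → Bool) → Bool} (h : ¬ Cst f) :
    ∃ x, f x = true := by
  by_contra hc
  push_neg at hc
  exact h (cst_of_const (c := false) (fun x => by
    cases hx : f x with
    | false => rfl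
    | true => exact absurd hx (hc x)))

lemma exists_false_of_not_cst {f : (Fin n → Bool) → Bool} (h : ¬ Cst f) :
    ∃ x, f x = false := by
  by_contra hc
  push_neg at hc
  exact h (cst_of_const (c := true) (fun x => by
    cases hx : f x with
    | true => rfl
    | false => exact absurd hx (hc x)))

lemma dichotomy {f0 f1 : (Fin n → Bool) → Bool}
    (hm1 : Monotone f1) (hle : ∀ x, f0 x = true → f1 x = true)
    (hnc0 : ¬ Cst f0) (hnc1 : ¬ Cst f1)
    (hO : (relSet f0 ∩ relSet f1).card ≤ 2) :
    (∃ w, (∀ x, x w = false → f0 x = false) ∧ (∀ x, x w = true → f1 x = true)) ∨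
    (∃ u v, u ≠ v ∧ u ∈ relSet f0 ∩ relSet f1 ∧ v ∈ relSet f0 ∩ relSet f1 ∧
      (((∀ x, x u = false → f0 x = false) ∧ (∀ x, x v = false → f0 x = false)) ∨
       ((∀ x, x u = true → f1 x = true) ∧ (∀ x, x v = true → f1 x = true)))) := by
  obtain ⟨x0, hx0⟩ := exists_true_of_not_cst hnc0
  obtain ⟨y0, hy0⟩ := exists_false_of_not_cst hnc1
  obtain ⟨p0, _, hp0⟩ := exists_minOne hx0
  obtain ⟨q0, _, hq0⟩ := exists_maxZero hy0
  have key : ∀ p q, MinOne f0 p → MaxZero f1 q →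
      ∃ i, i ∈ relSet f0 ∩ relSet f1 ∧ p i = true ∧ q i = false := by
    intro p q hp hq
    obtain ⟨i, hip, hiq⟩ := cross hm1 hle hp.1 hq.1
    exact ⟨i, Finset.mem_inter.mpr ⟨mem_relSet.mpr (rel_of_minOne hp hip),
      mem_relSet.mpr (rel_of_maxZero hq hiq)⟩, hip, hiq⟩
  obtain ⟨i0, hi0, _, _⟩ := key p0 q0 hp0 hq0
  have hcard : (relSet f0 ∩ relSet f1).card = 1 ∨ (relSet f0 ∩ relSet f1).card = 2 := by
    have : 0 < (relSet f0 ∩ relSet f1).card := Finset.card_pos.mpr ⟨i0, hi0⟩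
    omega
  -- helper for the |O| = 2 case, up to swapping u and v
  have main : ∀ u v : Fin n, u ≠ v → relSet f0 ∩ relSet f1 = {u, v} →
      (∀ p, MinOne f0 p → p u = true → p v = true) →
      (∃ w, (∀ x, x w = false → f0 x = false) ∧ (∀ x, x w = true → f1 x = true)) ∨
      (∃ u' v', u' ≠ v' ∧ u' ∈ relSet f0 ∩ relSet f1 ∧ v' ∈ relSet f0 ∩ relSet f1 ∧
        (((∀ x, x u' = false → f0 x = false) ∧ (∀ x, x v' = false → f0 x = false)) ∨
         ((∀ x, x u' = true → f1 x = true) ∧ (∀ x, x v' = true → f1 x = true)))) := by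
    intro u v hne hO2 himp
    have hmemu : u ∈ relSet f0 ∩ relSet f1 := by rw [hO2]; exact Finset.mem_insert_self _ _
    have hmemv : v ∈ relSet f0 ∩ relSet f1 := by
      rw [hO2]; exact Finset.mem_insert_of_mem (Finset.mem_singleton_self _)
    have hpv : ∀ p, MinOne f0 p → p v = true := by
      intro p hp
      obtain ⟨i, hiO, hip, hiq⟩ := key p q0 hp hq0
      rw [hO2] at hiO
      rcases Finset.mem_insert.mp hiO with h | h
      · exact himp p hp (h ▸ hip)
      · exact (Finset.mem_singleton.mp h) ▸ hip
    have hASv := AS_extract hpv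
    by_cases hATv : ∀ x, x v = true → f1 x = true
    · exact Or.inl ⟨v, hASv, hATv⟩
    · push_neg at hATv
      obtain ⟨x, hxv, hfx⟩ := hATv
      have hfx' : f1 x = false := by
        cases h : f1 x with
        | true => exact absurd h hfx
        | false => rfl
      obtain ⟨q1, hq11, hq12⟩ := exists_maxZero hfx'
      have hq1v : q1 v = true := by
        cases h : q1 v with
        | false => exact absurd (hq11 v h) (by rw [hxv]; simp)
        | true => rfl
      have hpu : ∀ p, MinOne f0 p → p u = true := by
        intro p hp
        obtain ⟨i, hiO, hip, hiq⟩ := key p q1 hp hq12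
        rw [hO2] at hiO
        rcases Finset.mem_insert.mp hiO with h | h
        · exact h ▸ hip
        · exact absurd ((Finset.mem_singleton.mp h) ▸ hiq) (by rw [hq1v]; simp)
      exact Or.inr ⟨u, v, hne, hmemu, hmemv, Or.inl ⟨AS_extract hpu, hASv⟩⟩
  rcases hcard with h1 | h2
  · obtain ⟨u, hu⟩ := Finset.card_eq_one.mp h1
    refine Or.inl ⟨u, AS_extract ?_, AT_extract ?_⟩
    · intro p hp
      obtain ⟨i, hiO, hip, _⟩ := key p q0 hp hq0
      rw [hu] at hiO
      exact (Finset.mem_singleton.mp hiO) ▸ hip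
    · intro q hq
      obtain ⟨i, hiO, _, hiq⟩ := key p0 q hp0 hq
      rw [hu] at hiO
      exact (Finset.mem_singleton.mp hiO) ▸ hiq
  · obtain ⟨u, v, hne, hO2⟩ := Finset.card_eq_two.mp h2
    by_cases hA : (∃ p, MinOne f0 p ∧ p u = true ∧ p v = false) ∧
        (∃ p, MinOne f0 p ∧ p v = true ∧ p u = false)
    · obtain ⟨⟨p1, hp1, hp1u, hp1v⟩, ⟨p2, hp2, hp2v, hp2u⟩⟩ := hA
      have hmemu : u ∈ relSet f0 ∩ relSet f1 := by rw [hO2]; exact Finset.mem_insert_self _ _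
      have hmemv : v ∈ relSet f0 ∩ relSet f1 := by
        rw [hO2]; exact Finset.mem_insert_of_mem (Finset.mem_singleton_self _)
      have hATu : ∀ x, x u = true → f1 x = true := by
        refine AT_extract ?_
        intro q hq
        obtain ⟨i, hiO, hip, hiq⟩ := key p1 q hp1 hq
        rw [hO2] at hiO
        rcases Finset.mem_insert.mp hiO with h | h
        · exact h ▸ hiq
        · exact absurd ((Finset.mem_singleton.mp h) ▸ hip) (by rw [hp1v]; simp)
      have hATv : ∀ x, x v = true → f1 x = true := by
        refine AT_extract ?_
        intro q hq
        obtain ⟨i, hiO, hip, hiq⟩ := key p2 q hp2 hq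
        rw [hO2] at hiO
        rcases Finset.mem_insert.mp hiO with h | h
        · exact absurd (h ▸ hip) (by rw [hp2u]; simp)
        · exact (Finset.mem_singleton.mp h) ▸ hiq
      exact Or.inr ⟨u, v, hne, hmemu, hmemv, Or.inr ⟨hATu, hATv⟩⟩
    · rcases not_and_or.mp hA with h | h
      · push_neg at h
        refine main u v hne hO2 ?_
        intro p hp hpu
        cases hv : p v with
        | true => rfl
        | false => exact absurd hpu (by have := h p hp; rw [hv] at this; simpa using this)
      · push_neg at h
        refine main v u hne.symm (by rw [hO2, Finset.pair_comm]) ?_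
        intro p hp hpv
        cases hv : p u with
        | true => rfl
        | false => exact absurd hpv (by have := h p hp; rw [hv] at this; simpa using this)

/-- the bound `R_d`: `0, 1, 2, 4, 6, 10, 18, 34, …`; for `d ≥ 4` it is `2^{d-2}+2`. -/
def B : ℕ → ℕ
  | 0 => 0
  | 1 => 1
  | 2 => 2
  | 3 => 4
  | 4 => 6
  | (m+5) => 2 ^ (m + 3) + 2

lemma A1 : ∀ d : ℕ, 1 ≤ d → 1 + B (d - 1) ≤ B d := by
  intro d hd
  obtain _|_|_|_|_|_|_|_|m := d
  · omega
  · decide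
  · decide
  · decide
  · decide
  · decide
  · decide
  · decide
  · show 1 + (2 ^ (m + 5) + 2) ≤ 2 ^ (m + 6) + 2
    have h1 : 2 ^ (m + 6) = 2 ^ (m + 5) * 2 := pow_succ 2 (m + 5)
    have h2 : 1 ≤ 2 ^ (m + 5) := Nat.one_le_two_pow
    omega

lemma A2 : ∀ d : ℕ, 2 ≤ d → 2 * B (d - 1) ≤ B d + 2 := by
  intro d hd
  obtain _|_|_|_|_|_|_|_|m := d
  · omega
  · omega
  · decide
  · decide
  · decide
  · decide
  · decide
  · decide
  · show 2 * (2 ^ (m + 5) + 2) ≤ 2 ^ (m + 6) + 2 + 2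
    have h1 : 2 ^ (m + 6) = 2 ^ (m + 5) * 2 := pow_succ 2 (m + 5)
    omega

lemma A3 : ∀ d : ℕ, 2 ≤ d → 2 + 2 * B (d - 2) ≤ B d := by
  intro d hd
  obtain _|_|_|_|_|_|_|_|m := d
  · omega
  · omega
  · decide
  · decide
  · decide
  · decide
  · decide
  · decide
  · show 2 + 2 * (2 ^ (m + 4) + 2) ≤ 2 ^ (m + 6) + 2
    have h1 : 2 ^ (m + 6) = 2 ^ (m + 4) * 2 * 2 := by ring
    have h2 : 2 ≤ 2 ^ (m + 4) := Nat.one_lt_two_pow_iff.mpr (by omega)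
    omega

lemma A4 : ∀ d : ℕ, 2 ≤ d → 1 + B (d - 1) + B (d - 3) ≤ B d := by
  intro d hd
  obtain _|_|_|_|_|_|_|_|m := d
  · omega
  · omega
  · decide
  · decide
  · decide
  · decide
  · decide
  · decide
  · show 1 + (2 ^ (m + 5) + 2) + (2 ^ (m + 3) + 2) ≤ 2 ^ (m + 6) + 2
    have h1 : 2 ^ (m + 6) = 2 ^ (m + 3) * 8 := by ring
    have h2 : 2 ^ (m + 5) = 2 ^ (m + 3) * 4 := by ring
    have h3 : 2 ≤ 2 ^ (m + 3) := Nat.one_lt_two_pow_iff.mpr (by omega)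
    omega

lemma nrel_def (f : (Fin n → Bool) → Bool) : nrel f = (relSet f).card := rfl

lemma count_key {f f0 f1 : (Fin n → Bool) → Bool} {z : Fin n}
    (hsub : relSet f ⊆ insert z (relSet f0 ∪ relSet f1)) :
    (relSet f).card + (relSet f0 ∩ relSet f1).card
      ≤ 1 + (relSet f0).card + (relSet f1).card := by
  have h1 := Finset.card_le_card hsub
  have h2 := Finset.card_insert_le z (relSet f0 ∪ relSet f1)
  have h3 := Finset.card_union_add_card_inter (relSet f0) (relSet f1)
  omega

lemma monotone_fx {f : (Fin n → Bool) → Bool} (h : Monotone f) (z : Fin n) (b : Bool) :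
    Monotone (fx f z b) := by
  intro x y hxy
  apply h
  intro i
  by_cases hiz : i = z
  · subst hiz; simp [Function.update_self]
  · rw [Function.update_of_ne hiz, Function.update_of_ne hiz]
    exact hxy i

lemma main_bound (d : ℕ) : ∀ f : (Fin n → Bool) → Bool, Monotone f → DT f ≤ d →
    nrel f ≤ B d := by
  induction d using Nat.strong_induction_on with
  | _ d ih =>
  intro f hmono hDT
  obtain ⟨t, htd, hte⟩ := exists_tree_of_DT_le hDT
  cases t with
  | leaf c =>
    have hcst : Cst f := fun x y => by rw [← hte x, ← hte y]; rfl
    rw [nrel_def, relSet_eq_empty_of_cst hcst]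
    simp
  | node z t0 t1 =>
    have hd1 : 1 ≤ d := by simp [DTree.depth] at htd; omega
    have h0 : t0.depth ≤ d - 1 := by simp [DTree.depth] at htd; omega
    have h1 : t1.depth ≤ d - 1 := by simp [DTree.depth] at htd; omega
    have hsubt := DT_subtree hte
    have hDT0 : DT (fx f z false) ≤ d - 1 := le_trans hsubt.1 h0
    have hDT1 : DT (fx f z true) ≤ d - 1 := le_trans hsubt.2 h1
    have hm0 : Monotone (fx f z false) := monotone_fx hmono z false
    have hm1 : Monotone (fx f z true) := monotone_fx hmono z true
    have hle01 : ∀ x, fx f z false x = true → fx f z true x = true := by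
      intro x hx
      have hupd : Function.update x z false ≤ Function.update x z true := by
        intro i
        by_cases hiz : i = z
        · subst hiz; simp [Function.update_self]
        · rw [Function.update_of_ne hiz, Function.update_of_ne hiz]
      have hmx := hmono hupd
      rw [show f (Function.update x z false) = fx f z false x from rfl, hx] at hmx
      cases hval : fx f z true x with
      | true => rfl
      | false =>
        rw [show f (Function.update x z true) = fx f z true x from rfl, hval] at hmx
        exact absurd hmx (by simp)
    have relSub := relSet_subset_root f z
    have hcount := count_key relSub
    have hn0 : nrel (fx f z false) ≤ B (d - 1) := ih (d - 1) (by omega) _ hm0 hDT0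
    have hn1 : nrel (fx f z true) ≤ B (d - 1) := ih (d - 1) (by omega) _ hm1 hDT1
    rw [nrel_def] at hn0 hn1
    by_cases hc0 : Cst (fx f z false)
    · have h0e : (relSet (fx f z false)).card = 0 := by
        rw [relSet_eq_empty_of_cst hc0]; rfl
      have hA := A1 d hd1
      rw [nrel_def]
      omega
    by_cases hc1 : Cst (fx f z true)
    · have h1e : (relSet (fx f z true)).card = 0 := by
        rw [relSet_eq_empty_of_cst hc1]; rfl
      have hA := A1 d hd1
      rw [nrel_def]
      omega
    -- both restrictions nonconstant, hence d ≥ 2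
    have hd2 : 2 ≤ d := by
      by_contra hlt
      have hz : d - 1 = 0 := by omega
      exact hc0 (cst_of_DT_le_zero (hz ▸ hDT0))
    rcases le_or_gt (relSet (fx f z false) ∩ relSet (fx f z true)).card 2 with hOle | hOgt
    · rcases dichotomy hm1 hle01 hc0 hc1 hOle with ⟨w, hAS, hAT⟩ |
        ⟨u, v, hne, hmu, hmv, hcase⟩
      · -- scenario (i): f0 = w ∧ g0, f1 = w ∨ h1
        have e0 : relSet (fx (fx f z false) w false) = ∅ :=
          relSet_eq_empty_of_cst (cst_of_const (c := false)
            (fun x => hAS _ (by simp [Function.update_self])))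
        have e1 : relSet (fx (fx f z true) w true) = ∅ :=
          relSet_eq_empty_of_cst (cst_of_const (c := true)
            (fun x => hAT _ (by simp [Function.update_self])))
        have hs0 : relSet (fx f z false) ⊆ insert w (relSet (fx (fx f z false) w true)) := by
          intro i hi
          have h := relSet_subset_root (fx f z false) w hi
          rwa [e0, Finset.empty_union] at h
        have hs1 : relSet (fx f z true) ⊆ insert w (relSet (fx (fx f z true) w false)) := by
          intro i hi
          have h := relSet_subset_root (fx f z true) w hi
          rwa [e1, Finset.union_empty] at h
        have hg0 : nrel (fx (fx f z false) w true) ≤ B (d - 2) := by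
          by_cases hg : Cst (fx (fx f z false) w true)
          · rw [nrel_def, relSet_eq_empty_of_cst hg]; simp
          · have hstep := DT_fx_succ false (d - 1) (fx f z false) w hDT0 hAS hg
            simp only [Bool.not_false] at hstep
            exact ih (d - 2) (by omega) _ (monotone_fx hm0 w true) (by omega)
        have hh1 : nrel (fx (fx f z true) w false) ≤ B (d - 2) := by
          by_cases hh : Cst (fx (fx f z true) w false)
          · rw [nrel_def, relSet_eq_empty_of_cst hh]; simp
          · have hstep := DT_fx_succ true (d - 1) (fx f z true) w hDT1 hAT hh
            simp only [Bool.not_true] at hstep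
            exact ih (d - 2) (by omega) _ (monotone_fx hm1 w false) (by omega)
        have hbig : relSet f ⊆ insert z (insert w
            (relSet (fx (fx f z false) w true) ∪ relSet (fx (fx f z true) w false))) := by
          intro i hi
          rcases Finset.mem_insert.mp (relSub hi) with h | h
          · exact Finset.mem_insert.mpr (Or.inl h)
          · refine Finset.mem_insert_of_mem ?_
            rcases Finset.mem_union.mp h with h' | h'
            · rcases Finset.mem_insert.mp (hs0 h') with h'' | h''
              · exact Finset.mem_insert.mpr (Or.inl h'')
              · exact Finset.mem_insert_of_mem (Finset.mem_union_left _ h'')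
            · rcases Finset.mem_insert.mp (hs1 h') with h'' | h''
              · exact Finset.mem_insert.mpr (Or.inl h'')
              · exact Finset.mem_insert_of_mem (Finset.mem_union_right _ h'')
        have hcard := Finset.card_le_card hbig
        have hi1 := Finset.card_insert_le z (insert w
          (relSet (fx (fx f z false) w true) ∪ relSet (fx (fx f z true) w false)))
        have hi2 := Finset.card_insert_le w
          (relSet (fx (fx f z false) w true) ∪ relSet (fx (fx f z true) w false))
        have hu := Finset.card_union_le (relSet (fx (fx f z false) w true))
          (relSet (fx (fx f z true) w false))
        have hA3 := A3 d hd2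
        rw [nrel_def] at hg0 hh1 ⊢
        omega
      · -- scenario (ii)
        have hpair : ({u, v} : Finset (Fin n)) ⊆
            relSet (fx f z false) ∩ relSet (fx f z true) := by
          intro i hi
          rcases Finset.mem_insert.mp hi with h | h
          · exact h ▸ hmu
          · exact (Finset.mem_singleton.mp h) ▸ hmv
        have h2le := Finset.card_le_card hpair
        rw [Finset.card_pair hne] at h2le
        have hOcard : (relSet (fx f z false) ∩ relSet (fx f z true)).card = 2 :=
          le_antisymm hOle h2le
        have hA4 := A4 d hd2
        rcases hcase with ⟨hASu, hASv⟩ | ⟨hATu, hATv⟩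
        · -- f0 = u ∧ v ∧ g
          have hAS'v : ∀ x, x v = false → fx (fx f z false) u true x = false := by
            intro x hx
            exact hASv _ (by rw [Function.update_of_ne hne.symm]; exact hx)
          have e0 : relSet (fx (fx f z false) u false) = ∅ :=
            relSet_eq_empty_of_cst (cst_of_const (c := false)
              (fun x => hASu _ (by simp [Function.update_self])))
          have e0' : relSet (fx (fx (fx f z false) u true) v false) = ∅ :=
            relSet_eq_empty_of_cst (cst_of_const (c := false)
              (fun x => hAS'v _ (by simp [Function.update_self])))
          have hs0 : relSet (fx f z false) ⊆ insert u (insert v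
              (relSet (fx (fx (fx f z false) u true) v true))) := by
            intro i hi
            have h := relSet_subset_root (fx f z false) u hi
            rw [e0, Finset.empty_union] at h
            rcases Finset.mem_insert.mp h with h' | h'
            · exact Finset.mem_insert.mpr (Or.inl h')
            · refine Finset.mem_insert_of_mem ?_
              have h'' := relSet_subset_root (fx (fx f z false) u true) v h'
              rwa [e0', Finset.empty_union] at h''
          have hng : nrel (fx (fx (fx f z false) u true) v true) ≤ B (d - 3) := by
            by_cases hcst' : Cst (fx (fx f z false) u true)
            · rw [nrel_def, relSet_eq_empty_of_cst (cst_fx hcst' v true)]; simp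
            · have hst1 := DT_fx_succ false (d - 1) (fx f z false) u hDT0 hASu hcst'
              simp only [Bool.not_false] at hst1
              by_cases hcstg : Cst (fx (fx (fx f z false) u true) v true)
              · rw [nrel_def, relSet_eq_empty_of_cst hcstg]; simp
              · have hst2 := DT_fx_succ false (d - 2) (fx (fx f z false) u true) v
                  (by omega) hAS'v hcstg
                simp only [Bool.not_false] at hst2
                exact ih (d - 3) (by omega) _
                  (monotone_fx (monotone_fx hm0 u true) v true) (by omega)
          have hc0card := Finset.card_le_card hs0
          have hj1 := Finset.card_insert_le u (insert v
            (relSet (fx (fx (fx f z false) u true) v true)))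
          have hj2 := Finset.card_insert_le v
            (relSet (fx (fx (fx f z false) u true) v true))
          rw [nrel_def] at hng ⊢
          omega
        · -- f1 = u ∨ v ∨ h
          have hAT'v : ∀ x, x v = true → fx (fx f z true) u false x = true := by
            intro x hx
            exact hATv _ (by rw [Function.update_of_ne hne.symm]; exact hx)
          have e1 : relSet (fx (fx f z true) u true) = ∅ :=
            relSet_eq_empty_of_cst (cst_of_const (c := true)
              (fun x => hATu _ (by simp [Function.update_self])))
          have e1' : relSet (fx (fx (fx f z true) u false) v true) = ∅ :=
            relSet_eq_empty_of_cst (cst_of_const (c := true)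
              (fun x => hAT'v _ (by simp [Function.update_self])))
          have hs1 : relSet (fx f z true) ⊆ insert u (insert v
              (relSet (fx (fx (fx f z true) u false) v false))) := by
            intro i hi
            have h := relSet_subset_root (fx f z true) u hi
            rw [e1, Finset.union_empty] at h
            rcases Finset.mem_insert.mp h with h' | h'
            · exact Finset.mem_insert.mpr (Or.inl h')
            · refine Finset.mem_insert_of_mem ?_
              have h'' := relSet_subset_root (fx (fx f z true) u false) v h'
              rwa [e1', Finset.union_empty] at h''
          have hng : nrel (fx (fx (fx f z true) u false) v false) ≤ B (d - 3) := by
            by_cases hcst' : Cst (fx (fx f z true) u false)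
            · rw [nrel_def, relSet_eq_empty_of_cst (cst_fx hcst' v false)]; simp
            · have hst1 := DT_fx_succ true (d - 1) (fx f z true) u hDT1 hATu hcst'
              simp only [Bool.not_true] at hst1
              by_cases hcstg : Cst (fx (fx (fx f z true) u false) v false)
              · rw [nrel_def, relSet_eq_empty_of_cst hcstg]; simp
              · have hst2 := DT_fx_succ true (d - 2) (fx (fx f z true) u false) v
                  (by omega) hAT'v hcstg
                simp only [Bool.not_true] at hst2
                exact ih (d - 3) (by omega) _
                  (monotone_fx (monotone_fx hm1 u false) v false) (by omega)
          have hc1card := Finset.card_le_card hs1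
          have hj1 := Finset.card_insert_le u (insert v
            (relSet (fx (fx (fx f z true) u false) v false)))
          have hj2 := Finset.card_insert_le v
            (relSet (fx (fx (fx f z true) u false) v false))
          rw [nrel_def] at hng ⊢
          omega
    · -- three or more common relevant variables
      have hA2 := A2 d hd2
      rw [nrel_def]
      omega

end Aux

/-- every monotone boolean function of decision tree depth at most
`d ≥ 5` has at most `2^{d−2} + 2` relevant variables. -/
theorem stmt18 {n : ℕ} (d : ℕ) (hd : 5 ≤ d) (f : (Fin n → Bool) → Bool)
    (hmono : Monotone f) (hDT : DT f ≤ d) :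
    nrel f ≤ 2 ^ (d - 2) + 2 := by
  obtain ⟨m, rfl⟩ : ∃ m, d = m + 5 := ⟨d - 5, by omega⟩
  have h := Aux.main_bound (m + 5) f hmono hDT
  have hB : Aux.B (m + 5) = 2 ^ (m + 3) + 2 := rfl
  have he : m + 5 - 2 = m + 3 := rfl
  rw [he]
  rw [hB] at h
  exact h
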